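/- For any positive constants a, b and any dimension L ≥ 1, sup over k₁ > a and k₂ with k₂ − k₁ > b of e^{k₁²u²/2} ∫_{‖y‖ ≥ k₂ u} e^{−‖y‖²/2} dy tends to 0 as u → ∞. -/

import Mathlib

open MeasureTheory

private lemma integrable_gauss' (L : ℕ) {c : ℝ} (hc : 0 < c) :
    Integrable (fun y : EuclideanSpace ℝ (Fin L) => Real.exp (-c * ‖y‖ ^ 2)) := by
  have h := (GaussianFourier.integrable_cexp_neg_mul_sq_norm_add (V := EuclideanSpace ℝ (Fin L))
      (b := (c : ℂ)) (by simpa using hc) 0 0).re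
  refine h.congr (Filter.Eventually.of_forall fun v => ?_)
  have : (-(c : ℂ) * (‖v‖ : ℂ) ^ 2 + 0 * ((inner ℝ (0 : EuclideanSpace ℝ (Fin L)) v : ℝ) : ℂ))
      = ((-c * ‖v‖ ^ 2 : ℝ) : ℂ) := by push_cast; ring
  simp only [this, ← Complex.ofReal_exp, Complex.ofReal_re, RCLike.re_to_complex]

private lemma pow_le_factorial_mul_exp' (n : ℕ) {s : ℝ} (hs : 0 ≤ s) :
    s ^ n ≤ (Nat.factorial n : ℝ) * Real.exp s := by
  have h := Real.sum_le_exp_of_nonneg hs (n + 1)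
  have h2 : s ^ n / (Nat.factorial n : ℝ)
      ≤ ∑ i ∈ Finset.range (n + 1), s ^ i / (Nat.factorial i : ℝ) :=
    Finset.single_le_sum (f := fun i => s ^ i / (Nat.factorial i : ℝ))
      (fun i _ => by positivity) (Finset.self_mem_range_succ n)
  have h3 := h2.trans h
  rw [div_le_iff₀ (by positivity)] at h3
  linarith

set_option maxHeartbeats 1000000 in
/-- For any `a, b > 0`, the supremum over `k₁ > a` and `k₂ − k₁ > b` of
`e^{k₁²u²/2} ∫_{‖y‖ ≥ k₂u} e^{−‖y‖²/2} dy` tends to `0` as `u → ∞`. -/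
theorem sup_exp_gaussian_tail_tendsto_zero (L : ℕ) (hL : 1 ≤ L)
    (a b : ℝ) (ha : 0 < a) (hb : 0 < b) :
    ∀ ε > 0, ∃ U : ℝ, ∀ u : ℝ, U ≤ u → ∀ k₁ k₂ : ℝ, a < k₁ → b < k₂ - k₁ →
      Real.exp (k₁ ^ 2 * u ^ 2 / 2) *
          ∫ y in {y : EuclideanSpace ℝ (Fin L) | k₂ * u ≤ ‖y‖},
            Real.exp (-‖y‖ ^ 2 / 2) < ε := by
  intro ε hε
  -- the final bounding function tends to zero
  have htend : Filter.Tendsto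
      (fun u : ℝ => (Nat.factorial L : ℝ) * Real.exp (-(b * (a + b) / 8) * u ^ 2))
      Filter.atTop (nhds 0) := by
    rw [show (0 : ℝ) = (Nat.factorial L : ℝ) * 0 by ring]
    apply Filter.Tendsto.const_mul
    apply Real.tendsto_exp_atBot.comp
    exact Filter.Tendsto.const_mul_atTop_of_neg (neg_lt_zero.2 (by positivity))
      (Filter.tendsto_pow_atTop two_ne_zero)
  have hev : ∀ᶠ u : ℝ in Filter.atTop,
      (Nat.factorial L : ℝ) * Real.exp (-(b * (a + b) / 8) * u ^ 2) < ε ∧ 1 ≤ u ∧ 11 / b ≤ u := by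
    filter_upwards [htend.eventually_lt_const hε, Filter.eventually_ge_atTop (1 : ℝ),
      Filter.eventually_ge_atTop (11 / b)] with u h1 h2 h3
    exact ⟨h1, h2, h3⟩
  obtain ⟨U, hU⟩ := Filter.eventually_atTop.mp hev
  refine ⟨U, fun u hu k₁ k₂ hk₁ hk₂ => ?_⟩
  obtain ⟨hfin, hu1, hub⟩ := hU u hu
  have hu0 : (0 : ℝ) < u := lt_of_lt_of_le one_pos hu1
  have hk₁0 : 0 < k₁ := ha.trans hk₁
  have hk₂ab : a + b < k₂ := by linarith
  have hk₂b : b < k₂ := by linarith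
  have hk₂0 : 0 < k₂ := hb.trans hk₂b
  set t : ℝ := b / (2 * k₂) with hts
  have ht0 : 0 < t := by positivity
  have ht1 : t ≤ 1 := by
    rw [hts, div_le_one (by positivity)]; linarith
  set S : Set (EuclideanSpace ℝ (Fin L)) := {y | k₂ * u ≤ ‖y‖} with hSs
  have hS : MeasurableSet S := measurableSet_le measurable_const measurable_norm
  have hint0 : Integrable (fun y : EuclideanSpace ℝ (Fin L) => Real.exp (-‖y‖ ^ 2 / 2)) := by
    have h := integrable_gauss' L (c := (1:ℝ)/2) (by norm_num)
    have e : (fun y : EuclideanSpace ℝ (Fin L) => Real.exp (-(1/2 : ℝ) * ‖y‖ ^ 2))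
        = fun y : EuclideanSpace ℝ (Fin L) => Real.exp (-‖y‖ ^ 2 / 2) := by
      funext y; norm_num; ring_nf
    rwa [e] at h
  have hintt : Integrable
      (fun y : EuclideanSpace ℝ (Fin L) => Real.exp (-(t / 2) * ‖y‖ ^ 2)) :=
    integrable_gauss' L (half_pos ht0)
  -- step B : bound the tail integral
  have key : (∫ y in S, Real.exp (-‖y‖ ^ 2 / 2))
      ≤ Real.exp (-((1 - t) * (k₂ * u) ^ 2 / 2)) * (Real.pi / (t / 2)) ^ ((L : ℝ) / 2) := by
    have hmono : ∀ y ∈ S, Real.exp (-‖y‖ ^ 2 / 2)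
        ≤ Real.exp (-((1 - t) * (k₂ * u) ^ 2 / 2)) * Real.exp (-(t / 2) * ‖y‖ ^ 2) := by
      intro y hy
      rw [← Real.exp_add]
      apply Real.exp_le_exp.2
      have hy' : k₂ * u ≤ ‖y‖ := hy
      have hy2 : (k₂ * u) ^ 2 ≤ ‖y‖ ^ 2 := by
        apply pow_le_pow_left₀ (by positivity) hy'
      nlinarith [mul_nonneg (sub_nonneg.2 ht1) (sub_nonneg.2 hy2)]
    calc (∫ y in S, Real.exp (-‖y‖ ^ 2 / 2))
        ≤ ∫ y in S, Real.exp (-((1 - t) * (k₂ * u) ^ 2 / 2)) * Real.exp (-(t / 2) * ‖y‖ ^ 2) :=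
          setIntegral_mono_on hint0.integrableOn ((hintt.const_mul _).integrableOn) hS hmono
      _ = Real.exp (-((1 - t) * (k₂ * u) ^ 2 / 2)) * ∫ y in S, Real.exp (-(t / 2) * ‖y‖ ^ 2) :=
          integral_const_mul _ _
      _ ≤ Real.exp (-((1 - t) * (k₂ * u) ^ 2 / 2))
            * ∫ y : EuclideanSpace ℝ (Fin L), Real.exp (-(t / 2) * ‖y‖ ^ 2) := by
          apply mul_le_mul_of_nonneg_left _ (Real.exp_nonneg _)
          exact setIntegral_le_integral hintt
            (Filter.Eventually.of_forall fun y => Real.exp_nonneg _)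
      _ = Real.exp (-((1 - t) * (k₂ * u) ^ 2 / 2)) * (Real.pi / (t / 2)) ^ ((L : ℝ) / 2) := by
          rw [GaussianFourier.integral_rexp_neg_mul_sq_norm (half_pos ht0),
            finrank_euclideanSpace_fin]
  -- rpow bound
  have hx : Real.pi / (t / 2) = 4 * Real.pi * k₂ / b := by
    rw [hts]; field_simp; ring
  have hx1 : (1 : ℝ) ≤ 4 * Real.pi * k₂ / b := by
    rw [le_div_iff₀ hb]
    nlinarith [Real.pi_gt_three]
  have hrpow : (Real.pi / (t / 2)) ^ ((L : ℝ) / 2) ≤ (4 * Real.pi * k₂ / b) ^ L := by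
    rw [hx]
    calc (4 * Real.pi * k₂ / b) ^ ((L : ℝ) / 2)
        ≤ (4 * Real.pi * k₂ / b) ^ ((L : ℝ)) :=
          Real.rpow_le_rpow_of_exponent_le hx1 (by
            have : (0:ℝ) ≤ (L : ℝ) := Nat.cast_nonneg L
            linarith)
      _ = (4 * Real.pi * k₂ / b) ^ L := Real.rpow_natCast _ L
  -- exponent bound
  have hexp : k₁ ^ 2 * u ^ 2 / 2 + -((1 - t) * (k₂ * u) ^ 2 / 2) ≤ -(b * k₂) * u ^ 2 / 4 := by
    have hbase : k₁ ^ 2 ≤ k₂ ^ 2 - b * k₂ := by nlinarith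
    have h4 : (1 - t) * (k₂ * u) ^ 2 = (k₂ ^ 2 - b * k₂ / 2) * u ^ 2 := by
      rw [hts]; field_simp
    rw [h4]
    nlinarith [mul_le_mul_of_nonneg_right hbase (sq_nonneg u)]
  -- step D
  set s : ℝ := b * k₂ * u ^ 2 / 8 with hss
  have hs0 : 0 ≤ s := by positivity
  have hstepD : Real.exp (-(b * k₂) * u ^ 2 / 4) * (4 * Real.pi * k₂ / b) ^ L
      ≤ (Nat.factorial L : ℝ) * Real.exp (-(b * (a + b) / 8) * u ^ 2) := by
    have h1 : (4 * Real.pi * k₂ / b) ^ L = (32 * Real.pi / (b ^ 2 * u ^ 2)) ^ L * s ^ L := by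
      rw [← mul_pow]; congr 1; rw [hss]; field_simp; ring
    have h3 : (32 * Real.pi / (b ^ 2 * u ^ 2)) ^ L ≤ 1 := by
      apply pow_le_one₀ (by positivity)
      rw [div_le_one (by positivity)]
      have hbu : 11 ≤ b * u := by
        rw [div_le_iff₀ hb] at hub; linarith
      nlinarith [Real.pi_lt_d2]
    have h4 : Real.exp (-(b * k₂) * u ^ 2 / 4) = Real.exp (-s) * Real.exp (-s) := by
      rw [← Real.exp_add]; congr 1; rw [hss]; ring
    calc Real.exp (-(b * k₂) * u ^ 2 / 4) * (4 * Real.pi * k₂ / b) ^ L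
        = Real.exp (-s) * ((32 * Real.pi / (b ^ 2 * u ^ 2)) ^ L * s ^ L) * Real.exp (-s) := by
          rw [h1, h4]; ring
      _ ≤ Real.exp (-s) * (1 * ((Nat.factorial L : ℝ) * Real.exp s)) * Real.exp (-s) := by
          gcongr
          exact pow_le_factorial_mul_exp' L hs0
      _ = (Nat.factorial L : ℝ) * Real.exp (-s) := by
          rw [one_mul, show Real.exp (-s) * ((Nat.factorial L : ℝ) * Real.exp s) * Real.exp (-s)
            = (Nat.factorial L : ℝ) * (Real.exp (-s) * Real.exp s) * Real.exp (-s) from by ring,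
            ← Real.exp_add, neg_add_cancel, Real.exp_zero, mul_one]
      _ ≤ (Nat.factorial L : ℝ) * Real.exp (-(b * (a + b) / 8) * u ^ 2) := by
          gcongr
          rw [hss]
          have hab : b * (a + b) ≤ b * k₂ := by nlinarith
          nlinarith [mul_le_mul_of_nonneg_right hab (sq_nonneg u)]
  -- final chain
  calc Real.exp (k₁ ^ 2 * u ^ 2 / 2) * ∫ y in S, Real.exp (-‖y‖ ^ 2 / 2)
      ≤ Real.exp (k₁ ^ 2 * u ^ 2 / 2)
          * (Real.exp (-((1 - t) * (k₂ * u) ^ 2 / 2)) * (Real.pi / (t / 2)) ^ ((L : ℝ) / 2)) :=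
        mul_le_mul_of_nonneg_left key (Real.exp_nonneg _)
    _ ≤ Real.exp (-(b * k₂) * u ^ 2 / 4) * (4 * Real.pi * k₂ / b) ^ L := by
        rw [← mul_assoc, ← Real.exp_add]
        exact mul_le_mul (Real.exp_le_exp.2 hexp) hrpow
          (Real.rpow_nonneg (by positivity) _) (Real.exp_nonneg _)
    _ ≤ (Nat.factorial L : ℝ) * Real.exp (-(b * (a + b) / 8) * u ^ 2) := hstepD
    _ < ε := hfin
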